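/- arXiv:2512.22171 — 2 statements merged into one kernel-verified Lean document; each statement's English description precedes it below -/
import Mathlib

section
/- Consider n ants on the unit interval [0,1], each at a distinct starting position and moving with unit speed either left or right; when two ants meet they both reverse direction, and an ant falls off when it reaches 0 or 1. Then every ant falls off by time 1. -/
/-- Ants-on-a-stick with reversal dynamics: `n` ants, `N` event intervals.
Trajectories are piecewise affine with slopes `±1`; at an event time where two
ants meet, they exchange (i.e. reverse) their slopes; ants not involved in a
collision keep their slope; collisions only occur at event times. -/
structure ReversalSystem (n N : ℕ) where
  x0 : Fin n → ℝ
  t : Fin (N + 1) → ℝ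
  s : Fin n → Fin N → ℝ
  x : Fin n → ℝ → ℝ
  ht0 : t 0 = 0
  hmono : StrictMono t
  hcover : (1 : ℝ) ≤ t (Fin.last N)
  hx0 : ∀ i, x i 0 = x0 i
  hinit : ∀ i, x0 i ∈ Set.Icc (0 : ℝ) 1
  hdist : Function.Injective x0
  hslope : ∀ i j, s i j = 1 ∨ s i j = -1
  haffine : ∀ (i : Fin n) (j : Fin N), ∀ u ∈ Set.Icc (t j.castSucc) (t j.succ),
      x i u = x i (t j.castSucc) + s i j * (u - t j.castSucc)
  hswap : ∀ (j j' : Fin N), (j : ℕ) + 1 = (j' : ℕ) → ∀ i i' : Fin n, i ≠ i' →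
      x i (t j.succ) = x i' (t j.succ) → s i j' = s i' j
  hkeep : ∀ (j j' : Fin N), (j : ℕ) + 1 = (j' : ℕ) → ∀ i : Fin n,
      (∀ i' : Fin n, i' ≠ i → x i (t j.succ) ≠ x i' (t j.succ)) → s i j' = s i j
  hnocol : ∀ i i' : Fin n, i ≠ i' → ∀ (j : Fin N),
      ∀ u ∈ Set.Ioo (t j.castSucc) (t j.succ), x i u ≠ x i' u

open Classical in
/-- every time in `[0,1]` lies in some event interval -/
lemma ants_exists_interval {n N : ℕ} (sys : ReversalSystem n N) {u : ℝ}
    (h0 : 0 ≤ u) (h1 : u ≤ 1) :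
    ∃ j : Fin N, u ∈ Set.Icc (sys.t j.castSucc) (sys.t j.succ) := by
  have hN : 0 < N := by
    rcases Nat.eq_zero_or_pos N with h | h
    · subst h
      have hc := sys.hcover
      have he : sys.t (Fin.last 0) = 0 := by
        have h2 : (Fin.last 0) = (0 : Fin 1) := rfl
        rw [h2, sys.ht0]
      rw [he] at hc; linarith
    · exact h
  have hP : ∃ k, ∃ h : k < N + 1, u ≤ sys.t ⟨k, h⟩ :=
    ⟨N, Nat.lt_succ_self N, le_trans h1 sys.hcover⟩
  obtain ⟨hlt, hle⟩ := Nat.find_spec hP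
  rcases Nat.eq_zero_or_pos (Nat.find hP) with hz | hpos
  · have hu0 : u = 0 := by
      have he : sys.t ⟨Nat.find hP, hlt⟩ = 0 := by
        have : (⟨Nat.find hP, hlt⟩ : Fin (N+1)) = 0 := Fin.ext hz
        rw [this, sys.ht0]
      rw [he] at hle; linarith
    refine ⟨⟨0, hN⟩, ?_, ?_⟩
    · have he : sys.t (Fin.castSucc ⟨0, hN⟩) = 0 := by
        have h2 : (Fin.castSucc ⟨0, hN⟩ : Fin (N+1)) = 0 := rfl
        rw [h2, sys.ht0]
      rw [he, hu0]
    · rw [hu0, ← sys.ht0]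
      exact sys.hmono.monotone (Fin.zero_le _)
  · set k₀ := Nat.find hP with hk₀
    have hklt : k₀ - 1 < N + 1 := by omega
    have hgt : sys.t ⟨k₀ - 1, hklt⟩ < u := by
      by_contra hcon
      push_neg at hcon
      exact Nat.find_min hP (by omega : k₀ - 1 < k₀) ⟨hklt, hcon⟩
    refine ⟨⟨k₀ - 1, by omega⟩, le_of_lt ?_, ?_⟩
    · exact hgt
    · have he : (Fin.succ (⟨k₀ - 1, by omega⟩ : Fin N) : Fin (N+1)) = ⟨k₀, hlt⟩ := by
        apply Fin.ext; simp; omega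
      rw [he]; exact hle

open Classical in
lemma ants_ghost {n N : ℕ} (sys : ReversalSystem n N) (hN : 0 < N) :
    ∀ k (hk : k < N), ∃ π : Equiv.Perm (Fin n), ∀ i,
      sys.x i (sys.t (Fin.castSucc ⟨k, hk⟩)) =
        sys.x0 (π i) + sys.s (π i) ⟨0, hN⟩ * sys.t (Fin.castSucc ⟨k, hk⟩) ∧
      sys.s i ⟨k, hk⟩ = sys.s (π i) ⟨0, hN⟩ := by
  intro k
  induction k with
  | zero =>
      intro hk
      refine ⟨Equiv.refl _, fun i => ?_⟩
      have he : sys.t (Fin.castSucc ⟨0, hk⟩) = 0 := by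
        have h2 : (Fin.castSucc ⟨0, hk⟩ : Fin (N+1)) = 0 := rfl
        rw [h2, sys.ht0]
      constructor
      · rw [he, sys.hx0 i]; simp
      · rfl
  | succ k ih =>
      intro hk
      obtain ⟨π, hπ⟩ := ih (by omega)
      set j : Fin N := ⟨k, by omega⟩ with hj
      set j' : Fin N := ⟨k + 1, hk⟩ with hj'
      set T : ℝ := sys.t (Fin.succ j) with hT
      -- position formula at time T with the old permutation
      have hpos : ∀ a, sys.x a T = sys.x0 (π a) + sys.s (π a) ⟨0, hN⟩ * T := by
        intro a
        have hmem : T ∈ Set.Icc (sys.t (Fin.castSucc j)) (sys.t (Fin.succ j)) :=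
          ⟨le_of_lt (sys.hmono (Fin.castSucc_lt_succ : Fin.castSucc j < Fin.succ j)), le_refl T⟩
        have h1 := sys.haffine a j T hmem
        obtain ⟨hp, hs⟩ := hπ a
        rw [h1, hp, hs]; ring
      -- collision partner map
      set p : Fin n → Fin n → Prop := fun a b => b ≠ a ∧ sys.x b T = sys.x a T with hp
      set σm : Fin n → Fin n := fun a => if h : ∃! b, p a b then h.choose else a with hσm
      have hσpos : ∀ a (h : ∃! b, p a b), σm a = h.choose := by
        intro a h; simp only [hσm]; rw [dif_pos h]
      have hσneg : ∀ a, ¬ (∃! b, p a b) → σm a = a := by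
        intro a h; simp only [hσm]; rw [dif_neg h]
      have hσx : ∀ a, sys.x (σm a) T = sys.x a T := by
        intro a
        by_cases h : ∃! b, p a b
        · rw [hσpos a h]; exact h.choose_spec.1.2
        · rw [hσneg a h]
      have hinv : Function.Involutive σm := by
        intro a
        by_cases h : ∃! b, p a b
        · rw [hσpos a h]
          set c := h.choose with hc
          have hpc : p a c := h.choose_spec.1
          have h2 : ∃! b, p c b := by
            refine ⟨a, ⟨fun hac => hpc.1 hac.symm, hpc.2.symm⟩, ?_⟩
            rintro y ⟨hyc, hxy⟩
            by_contra hya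
            have hpy : p a y := ⟨hya, hxy.trans hpc.2⟩
            exact hyc (h.choose_spec.2 y hpy)
          rw [hσpos c h2]
          exact (h2.choose_spec.2 a ⟨fun hac => hpc.1 hac.symm, hpc.2.symm⟩).symm
        · rw [hσneg a h, hσneg a h]
      have hnat : (j : ℕ) + 1 = (j' : ℕ) := rfl
      -- slope transfer
      have hslopeT : ∀ a, sys.s a j' = sys.s (σm a) j := by
        intro a
        by_cases h : ∃! b, p a b
        · rw [hσpos a h]
          have hpc : p a h.choose := h.choose_spec.1
          exact sys.hswap j j' hnat a h.choose (fun e => hpc.1 e.symm) hpc.2.symm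
        · rw [hσneg a h]
          by_cases he : ∃ b, p a b
          · obtain ⟨c, hc⟩ := he
            have hd : ∃ d, p a d ∧ d ≠ c := by
              by_contra hcon
              push_neg at hcon
              exact h ⟨c, hc, fun y hy => hcon y hy⟩
            obtain ⟨d, hd, hdc⟩ := hd
            have e1 : sys.s a j' = sys.s d j :=
              sys.hswap j j' hnat a d (fun e => hd.1 e.symm) hd.2.symm
            have e2 : sys.s c j' = sys.s d j :=
              sys.hswap j j' hnat c d (fun e => hdc (e.symm)) (hc.2.trans hd.2.symm)
            have e3 : sys.s c j' = sys.s a j :=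
              sys.hswap j j' hnat c a hc.1 hc.2
            rw [e1, ← e2, e3]
          · apply sys.hkeep j j' hnat a
            intro b hb hxb
            exact he ⟨b, hb, hxb.symm⟩
      -- assemble the new permutation
      refine ⟨(Function.Involutive.toPerm σm hinv).trans π, fun a => ?_⟩
      have happ : ((Function.Involutive.toPerm σm hinv).trans π) a = π (σm a) := rfl
      have hcs : sys.t (Fin.castSucc j') = T := by
        have : (Fin.castSucc j' : Fin (N+1)) = Fin.succ j := Fin.ext rfl
        rw [this]
      constructor
      · rw [happ, hcs, ← hσx a, hpos (σm a)]
      · rw [happ, hslopeT a, (hπ (σm a)).2]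

open Classical in
lemma ants_ghost_pos {n N : ℕ} (sys : ReversalSystem n N) (hN : 0 < N) (i : Fin n)
    {u : ℝ} (h0 : 0 ≤ u) (h1 : u ≤ 1) :
    ∃ m, sys.x i u = sys.x0 m + sys.s m ⟨0, hN⟩ * u := by
  obtain ⟨j, hj⟩ := ants_exists_interval sys h0 h1
  obtain ⟨π, hπ⟩ := ants_ghost sys hN j.1 j.2
  have hjj : (⟨j.1, j.2⟩ : Fin N) = j := rfl
  rw [hjj] at hπ
  obtain ⟨hp, hs⟩ := hπ i
  have h1 := sys.haffine i j u hj
  exact ⟨π i, by rw [h1, hp, hs]; ring⟩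

lemma ants_cont {n N : ℕ} (sys : ReversalSystem n N) (i : Fin n) :
    ContinuousOn (sys.x i) (Set.Icc 0 1) := by
  have hU : ContinuousOn (sys.x i)
      (⋃ j : Fin N, Set.Icc (sys.t (Fin.castSucc j)) (sys.t (Fin.succ j))) := by
    apply (locallyFinite_of_finite _).continuousOn_iUnion (fun j => isClosed_Icc)
    intro j
    have hcf : ContinuousOn
        (fun u => sys.x i (sys.t (Fin.castSucc j)) + sys.s i j * (u - sys.t (Fin.castSucc j)))
        (Set.Icc (sys.t (Fin.castSucc j)) (sys.t (Fin.succ j))) := by fun_prop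
    exact hcf.congr (fun u hu => sys.haffine i j u hu)
  refine hU.mono ?_
  intro u hu
  obtain ⟨j, hj⟩ := ants_exists_interval sys hu.1 hu.2
  exact Set.mem_iUnion.2 ⟨j, hj⟩

/-- every ant falls off (reaches an endpoint of the stick) by time 1. -/
theorem ants_all_fall_by_time_one (n N : ℕ) (sys : ReversalSystem n N) (i : Fin n) :
    ∃ u ∈ Set.Icc (0 : ℝ) 1, sys.x i u = 0 ∨ sys.x i u = 1 := by
  have hN : 0 < N := by
    rcases Nat.eq_zero_or_pos N with h | h
    · subst h
      have hc := sys.hcover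
      have he : sys.t (Fin.last 0) = 0 := by
        have h2 : (Fin.last 0) = (0 : Fin 1) := rfl
        rw [h2, sys.ht0]
      rw [he] at hc; linarith
    · exact h
  obtain ⟨m, hm⟩ := ants_ghost_pos sys hN i zero_le_one le_rfl
  have hx1 : sys.x i 1 ≤ 0 ∨ 1 ≤ sys.x i 1 := by
    rcases sys.hslope m ⟨0, hN⟩ with h | h
    · right; rw [hm, h]; have := (sys.hinit m).1; linarith
    · left; rw [hm, h]; have := (sys.hinit m).2; linarith
  have hx0 := sys.hx0 i
  have hinit := sys.hinit i
  have hc := ants_cont sys i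
  rcases hx1 with h | h
  · have hmem : (0:ℝ) ∈ Set.Icc (sys.x i 1) (sys.x i 0) := ⟨h, by rw [hx0]; exact hinit.1⟩
    obtain ⟨u, hu, hu0⟩ := intermediate_value_Icc' (by norm_num : (0:ℝ) ≤ 1) hc hmem
    exact ⟨u, hu, Or.inl hu0⟩
  · have hmem : (1:ℝ) ∈ Set.Icc (sys.x i 0) (sys.x i 1) := ⟨by rw [hx0]; exact hinit.2, h⟩
    obtain ⟨u, hu, hu1⟩ := intermediate_value_Icc (by norm_num : (0:ℝ) ≤ 1) hc hmem
    exact ⟨u, hu, Or.inr hu1⟩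
end

section
/- With the ants-on-a-stick dynamics (reversal at collisions), the multiset of ant positions at any time t equals the multiset of positions obtained under the 'pass-through' dynamics where each ant ignores collisions and moves in its initial direction at unit speed (with removal upon reaching an endpoint). -/
/-- At a collision time, the multiset of (position, slope) pairs is unchanged
when passing from the old slopes to the new slopes. -/
lemma swap_step {n N : ℕ} (sys : ReversalSystem n N) (j j' : Fin N)
    (hjj' : (j : ℕ) + 1 = (j' : ℕ)) :
    (Finset.univ.val.map fun i : Fin n => (sys.x i (sys.t j.succ), sys.s i j')) =
      (Finset.univ.val.map fun i : Fin n => (sys.x i (sys.t j.succ), sys.s i j)) := by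
  classical
  set T := sys.t j.succ with hT
  set π : Fin n → Fin n := fun i =>
    if h : ∃! i', i' ≠ i ∧ sys.x i' T = sys.x i T then h.choose else i with hπ
  have hxπ : ∀ i, sys.x (π i) T = sys.x i T := by
    intro i
    by_cases h : ∃! i', i' ≠ i ∧ sys.x i' T = sys.x i T
    · simp only [hπ, dif_pos h]
      exact h.choose_spec.1.2
    · simp only [hπ, dif_neg h]
  have hinv : Function.Involutive π := by
    intro i
    by_cases h : ∃! i', i' ≠ i ∧ sys.x i' T = sys.x i T
    · have hb : π i = h.choose := by simp only [hπ, dif_pos h]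
      set b := h.choose with hbdef
      have hbspec := h.choose_spec
      have h' : ∃! i', i' ≠ b ∧ sys.x i' T = sys.x b T := by
        refine ⟨i, ⟨(Ne.symm hbspec.1.1), hbspec.1.2.symm⟩, ?_⟩
        intro c hc
        by_cases hci : c = i
        · exact hci
        · exact absurd (hbspec.2 c ⟨hci, hc.2.trans hbspec.1.2⟩) hc.1
      have hπb : π b = h'.choose := by simp only [hπ, dif_pos h']
      rw [hb, hπb]
      exact (h'.choose_spec.2 i ⟨Ne.symm hbspec.1.1, hbspec.1.2.symm⟩).symm
    · have : π i = i := by simp only [hπ, dif_neg h]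
      rw [this, this]
  have hsπ : ∀ i, sys.s (π i) j = sys.s i j' := by
    intro i
    by_cases h : ∃! i', i' ≠ i ∧ sys.x i' T = sys.x i T
    · have hb : π i = h.choose := by simp only [hπ, dif_pos h]
      have hbspec := h.choose_spec
      rw [hb]
      exact (sys.hswap j j' hjj' i h.choose (Ne.symm hbspec.1.1) hbspec.1.2.symm).symm
    · have hπi : π i = i := by simp only [hπ, dif_neg h]
      rw [hπi]
      by_cases hex : ∃ i', i' ≠ i ∧ sys.x i' T = sys.x i T
      · obtain ⟨b, hb⟩ := hex
        have : ∃ c, (c ≠ i ∧ sys.x c T = sys.x i T) ∧ c ≠ b := by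
          by_contra hc
          push_neg at hc
          exact h ⟨b, hb, fun c hcc => hc c hcc⟩
        obtain ⟨c, hc, hcb⟩ := this
        have h1 : sys.s c j' = sys.s b j :=
          sys.hswap j j' hjj' c b hcb (hc.2.trans hb.2.symm)
        have h2 : sys.s c j' = sys.s i j :=
          sys.hswap j j' hjj' c i hc.1 hc.2
        have h3 : sys.s i j' = sys.s b j :=
          sys.hswap j j' hjj' i b (Ne.symm hb.1) hb.2.symm
        rw [h3, ← h1, h2]
      · push_neg at hex
        exact (sys.hkeep j j' hjj' i (fun i' hi' => fun hxx => (hex i' hi' hxx.symm).elim)).symm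
  have hmap : Finset.univ.val.map π = Finset.univ.val := by
    have hcard : (Finset.univ.map ⟨π, hinv.injective⟩) = (Finset.univ : Finset (Fin n)) :=
      Finset.eq_univ_of_card _ (by simp)
    have h1 : (Finset.univ.map ⟨π, hinv.injective⟩).val = (Finset.univ : Finset (Fin n)).val := by
      rw [hcard]
    rwa [Finset.map_val] at h1
  calc (Finset.univ.val.map fun i : Fin n => (sys.x i T, sys.s i j'))
      = Finset.univ.val.map ((fun i : Fin n => (sys.x i T, sys.s i j)) ∘ π) := by
        have hf : (fun i : Fin n => (sys.x i T, sys.s i j')) =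
            ((fun i : Fin n => (sys.x i T, sys.s i j)) ∘ π) := by
          funext i
          simp only [Function.comp]
          rw [hxπ i, hsπ i]
        rw [hf]
    _ = (Finset.univ.val.map π).map (fun i : Fin n => (sys.x i T, sys.s i j)) := by
        rw [Multiset.map_map]
    _ = Finset.univ.val.map (fun i : Fin n => (sys.x i T, sys.s i j)) := by rw [hmap]

lemma pairs_eq {n N : ℕ} (hN : 0 < N) (sys : ReversalSystem n N) (j : Fin N) :
    (Finset.univ.val.map fun i : Fin n => (sys.x i (sys.t j.castSucc), sys.s i j)) =
      (Finset.univ.val.map fun i : Fin n =>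
        (sys.x0 i + sys.s i ⟨0, hN⟩ * sys.t j.castSucc, sys.s i ⟨0, hN⟩)) := by
  obtain ⟨jv, hj⟩ := j
  induction jv with
  | zero =>
      have h0 : (Fin.castSucc ⟨0, hj⟩ : Fin (N + 1)) = 0 := rfl
      rw [h0, sys.ht0]
      have hf : (fun i : Fin n => (sys.x i 0, sys.s i ⟨0, hj⟩)) =
          (fun i : Fin n => (sys.x0 i + sys.s i ⟨0, hN⟩ * 0, sys.s i ⟨0, hN⟩)) := by
        funext i
        rw [sys.hx0 i]
        norm_num
      rw [hf]
  | succ jv ih =>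
      have hjv : jv < N := Nat.lt_of_succ_lt hj
      set j : Fin N := ⟨jv, hjv⟩ with hjdef
      set j' : Fin N := ⟨jv + 1, hj⟩ with hj'def
      have hjj' : (j : ℕ) + 1 = (j' : ℕ) := rfl
      have hcs : (Fin.castSucc j' : Fin (N + 1)) = Fin.succ j := by
        apply Fin.ext; rfl
      have IH := ih hjv
      set a := sys.t j.castSucc with ha
      set Δ := sys.t j.succ - a with hΔ
      have step := congrArg (Multiset.map (fun p : ℝ × ℝ => (p.1 + p.2 * Δ, p.2))) IH
      rw [Multiset.map_map, Multiset.map_map] at step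
      have hle : a ≤ sys.t j.succ := le_of_lt (sys.hmono (Fin.castSucc_lt_succ : j.castSucc < j.succ))
      have hL : ((fun p : ℝ × ℝ => (p.1 + p.2 * Δ, p.2)) ∘
          fun i : Fin n => (sys.x i a, sys.s i j)) =
          fun i : Fin n => (sys.x i (sys.t j.succ), sys.s i j) := by
        funext i
        simp only [Function.comp]
        rw [sys.haffine i j (sys.t j.succ) ⟨hle, le_refl _⟩]
      have hR : ((fun p : ℝ × ℝ => (p.1 + p.2 * Δ, p.2)) ∘
          fun i : Fin n => (sys.x0 i + sys.s i ⟨0, hN⟩ * a, sys.s i ⟨0, hN⟩)) =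
          fun i : Fin n => (sys.x0 i + sys.s i ⟨0, hN⟩ * sys.t j.succ, sys.s i ⟨0, hN⟩) := by
        funext i
        simp only [Function.comp]
        rw [hΔ]
        ring_nf
      rw [hL, hR] at step
      rw [hcs]
      exact (swap_step sys j j' hjj').trans step

/-- at any time, the multiset of positions under reversal dynamics
equals the multiset of positions under pass-through dynamics (each ant moving
forever with its initial velocity). -/
theorem reversal_eq_pass_through_multiset (n N : ℕ) (hN : 0 < N)
    (sys : ReversalSystem n N) (u : ℝ)
    (hu : u ∈ Set.Icc (0 : ℝ) (sys.t (Fin.last N))) :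
    (Finset.univ.val.map fun i => sys.x i u) =
      (Finset.univ.val.map fun i : Fin n => sys.x0 i + sys.s i ⟨0, hN⟩ * u) := by
  classical
  obtain ⟨hu0, hu1⟩ := hu
  -- find the interval containing u
  set S : Finset (Fin N) := Finset.univ.filter (fun j => sys.t j.castSucc ≤ u) with hS
  have hS0 : (⟨0, hN⟩ : Fin N) ∈ S := by
    simp only [hS, Finset.mem_filter, Finset.mem_univ, true_and]
    have : (Fin.castSucc ⟨0, hN⟩ : Fin (N + 1)) = 0 := rfl
    rw [this, sys.ht0]
    exact hu0
  have hSne : S.Nonempty := ⟨_, hS0⟩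
  set j : Fin N := S.max' hSne with hjdef
  have hj1 : sys.t j.castSucc ≤ u := by
    have := S.max'_mem hSne
    simpa [hS] using this
  have hj2 : u ≤ sys.t j.succ := by
    by_contra hcon
    push_neg at hcon
    by_cases hlast : (j : ℕ) + 1 = N
    · have : (Fin.succ j : Fin (N + 1)) = Fin.last N := by
        apply Fin.ext
        simpa using hlast
      rw [this] at hcon
      exact absurd hu1 (not_le.mpr hcon)
    · have hlt : (j : ℕ) + 1 < N := lt_of_le_of_ne (Nat.succ_le_of_lt j.isLt) hlast
      set j'' : Fin N := ⟨(j : ℕ) + 1, hlt⟩ with hj''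
      have hcs : (Fin.castSucc j'' : Fin (N + 1)) = Fin.succ j := by
        apply Fin.ext; rfl
      have hmem : j'' ∈ S := by
        simp only [hS, Finset.mem_filter, Finset.mem_univ, true_and]
        rw [hcs]
        exact le_of_lt hcon
      have := S.le_max' j'' hmem
      have hgt : j < j'' := by
        rw [Fin.lt_def]
        simp [hj'']
      exact absurd this (not_le.mpr hgt)
  have key := congrArg (Multiset.map (fun p : ℝ × ℝ => p.1 + p.2 * (u - sys.t j.castSucc)))
    (pairs_eq hN sys j)
  rw [Multiset.map_map, Multiset.map_map] at key
  have hL : ((fun p : ℝ × ℝ => p.1 + p.2 * (u - sys.t j.castSucc)) ∘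
      fun i : Fin n => (sys.x i (sys.t j.castSucc), sys.s i j)) =
      fun i : Fin n => sys.x i u := by
    funext i
    simp only [Function.comp]
    rw [← sys.haffine i j u ⟨hj1, hj2⟩]
  have hR : ((fun p : ℝ × ℝ => p.1 + p.2 * (u - sys.t j.castSucc)) ∘
      fun i : Fin n => (sys.x0 i + sys.s i ⟨0, hN⟩ * sys.t j.castSucc, sys.s i ⟨0, hN⟩)) =
      fun i : Fin n => sys.x0 i + sys.s i ⟨0, hN⟩ * u := by
    funext i
    simp only [Function.comp]
    ring_nf
  rw [hL, hR] at key
  exact key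
end
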